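/- If a group G acts effectively on ℝ by order-preserving homeomorphisms, then G is right-orderable. -/

import Mathlib

/-- Lexicographic comparison of functions `ℝ → ℝ` with respect to a well-ordering of `ℝ`. -/
private def LexLt (u v : ℝ → ℝ) : Prop :=
  ∃ t, u t < v t ∧ ∀ s, WellOrderingRel s t → u s = v s

private theorem LexLt_trans {u v w : ℝ → ℝ} (h1 : LexLt u v) (h2 : LexLt v w) : LexLt u w := by
  obtain ⟨t₁, hlt₁, heq₁⟩ := h1
  obtain ⟨t₂, hlt₂, heq₂⟩ := h2
  rcases trichotomous_of WellOrderingRel t₁ t₂ with h | h | h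
  · exact ⟨t₁, by rw [← heq₂ t₁ h]; exact hlt₁,
      fun s hs => (heq₁ s hs).trans (heq₂ s (_root_.trans hs h))⟩
  · subst h
    exact ⟨t₁, hlt₁.trans hlt₂, fun s hs => (heq₁ s hs).trans (heq₂ s hs)⟩
  · exact ⟨t₂, by rw [heq₁ t₂ h]; exact hlt₂,
      fun s hs => (heq₁ s (_root_.trans hs h)).trans (heq₂ s hs)⟩

private theorem LexLt_irrefl (u : ℝ → ℝ) : ¬ LexLt u u := by
  rintro ⟨t, hlt, -⟩; exact lt_irrefl _ hlt

private theorem LexLt_total {u v : ℝ → ℝ} (h : u ≠ v) : LexLt u v ∨ LexLt v u := by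
  have hne : {t | u t ≠ v t}.Nonempty := by
    by_contra hc
    exact h (funext fun t => by
      by_contra ht
      exact hc ⟨t, ht⟩)
  obtain ⟨t, ht, hmin⟩ := (IsWellFounded.wf (r := WellOrderingRel)).has_min _ hne
  have heq : ∀ s, WellOrderingRel s t → u s = v s := fun s hs => by
    by_contra hus; exact hmin s hus hs
  rcases lt_trichotomy (u t) (v t) with h' | h' | h'
  · exact Or.inl ⟨t, h', heq⟩
  · exact absurd h' ht
  · exact Or.inr ⟨t, h', fun s hs => (heq s hs).symm⟩

/-- If a group `G` acts effectively on `ℝ` by order-preserving homeomorphisms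
(i.e. strictly increasing bijections), then `G` is right-orderable. -/
theorem rightOrderable_of_effective_action_on_real
    (G : Type*) [Group G] (a : G →* Equiv.Perm ℝ)
    (hmono : ∀ g : G, StrictMono ⇑(a g))
    (heff : Function.Injective a) :
    ∃ lt : G → G → Prop, IsStrictTotalOrder G lt ∧
      ∀ x y z : G, lt x y → lt (x * z) (y * z) := by
  refine ⟨fun x y => LexLt (⇑(a y⁻¹)) (⇑(a x⁻¹)), ?_, ?_⟩
  · refine { trichotomous := ?_, irrefl := fun x => LexLt_irrefl _,
             trans := fun x y z h1 h2 => LexLt_trans h2 h1 }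
    intro x y
    by_cases hxy : x = y
    · exact fun _ _ => hxy
    · have hne : ⇑(a y⁻¹) ≠ ⇑(a x⁻¹) := by
        intro h
        apply hxy
        have : a y⁻¹ = a x⁻¹ := Equiv.coe_fn_injective h
        have := heff this
        exact (inv_injective this).symm
      rcases LexLt_total hne with h | h
      · exact fun h1 _ => absurd h h1
      · exact fun _ h2 => absurd h h2
  · intro x y z h
    obtain ⟨t, hlt, heq⟩ := h
    have key : ∀ (g : G) (s : ℝ), a (g * z)⁻¹ s = a z⁻¹ (a g⁻¹ s) := by
      intro g s
      rw [mul_inv_rev, map_mul, Equiv.Perm.mul_apply]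
    refine ⟨t, ?_, ?_⟩
    · rw [key y t, key x t]
      exact hmono z⁻¹ hlt
    · intro s hs
      rw [key y s, key x s, heq s hs]
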